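/- For integers m ≥ 2 and w with 0 < w < m and gcd(w, m) = 1, the Dedekind sum s(w; m) = (1/(4m)) ∑_{k=1}^{m-1} cot(πk/m) cot(πkw/m) satisfies 12·w·m·s(w; m) ≡ w² + 1 (mod m). -/

import Mathlib

open Finset Complex

noncomputable def sawB (m a : ℕ) : ℝ := if m ∣ a then 0 else ((a % m : ℕ) : ℝ) / m - 1 / 2

lemma cot_as_frac (m j : ℕ) (hm : 2 ≤ m) (hj1 : 1 ≤ j) (hjm : j < m) :
    (1 : ℂ) / (Complex.exp (2 * Real.pi * I / m) ^ j - 1) + 1 / 2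
      = -(I / 2) * (Real.cot (Real.pi * j / m) : ℝ) := by
  have hm0 : (m : ℂ) ≠ 0 := by exact_mod_cast (by positivity : (0:ℝ) < (m:ℝ)).ne'
  set x : ℂ := Complex.exp (2 * Real.pi * I / m) ^ j with hxdef
  have hprim : IsPrimitiveRoot (Complex.exp (2 * Real.pi * I / m)) m :=
    Complex.isPrimitiveRoot_exp m (by omega)
  have hx1 : x ≠ 1 := by
    rw [hxdef]
    intro hone
    have h := (hprim.pow_eq_one_iff_dvd j).mp hone
    exact absurd (Nat.le_of_dvd (by omega) h) (by omega)
  have hxexp : Complex.exp (2 * I * (Real.pi * j / m : ℝ)) = x := by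
    rw [hxdef, ← Complex.exp_nat_mul]
    congr 1
    push_cast
    field_simp
  rw [Complex.ofReal_cot, Complex.cot_eq_exp_ratio, hxexp]
  have hd : x - 1 ≠ 0 := sub_ne_zero.mpr hx1
  have hd2 : (1 : ℂ) - x ≠ 0 := fun h => hx1 (by linear_combination -h)
  field_simp
  ring


lemma mul_lin_sum (x : ℂ) (n : ℕ) :
    (x - 1) * ∑ a ∈ Finset.range n, (a : ℂ) * x ^ a
      = ((n : ℂ) - 1) * x ^ n - (∑ a ∈ Finset.range n, x ^ a) + 1 := by
  induction n with
  | zero => simp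
  | succ n ih =>
    rw [Finset.sum_range_succ, Finset.sum_range_succ]
    push_cast
    linear_combination ih

lemma geomSumZero (x : ℂ) (m : ℕ) (hx : x ^ m = 1) (hx1 : x ≠ 1) :
    ∑ a ∈ Finset.range m, x ^ a = 0 := by
  rw [geom_sum_eq hx1, hx]
  simp

lemma lin_sum (x : ℂ) (m : ℕ) (hx : x ^ m = 1) (hx1 : x ≠ 1) :
    ∑ a ∈ Finset.range m, (a : ℂ) * x ^ a = m / (x - 1) := by
  have hd : x - 1 ≠ 0 := sub_ne_zero.mpr hx1
  rw [eq_div_iff hd, mul_comm _ (x-1), mul_lin_sum, hx, geomSumZero x m hx hx1]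
  ring

lemma sawB_zero (m : ℕ) (a : ℕ) (h : m ∣ a) : sawB m a = 0 := by simp [sawB, h]

lemma sawB_not_dvd (m a : ℕ) (h1 : 1 ≤ a) (h2 : a < m) : ¬ m ∣ a :=
  fun h => absurd (Nat.le_of_dvd (by omega) h) (by omega)

lemma sawB_eq (m a : ℕ) (h1 : 1 ≤ a) (h2 : a < m) :
    sawB m a = (a : ℝ) / m - 1 / 2 := by
  rw [sawB, if_neg (sawB_not_dvd m a h1 h2), Nat.mod_eq_of_lt h2]

lemma sawB_fourier (m j : ℕ) (hm : 2 ≤ m) (hj1 : 1 ≤ j) (hjm : j < m) :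
    ∑ a ∈ Finset.range m, (sawB m a : ℂ) * Complex.exp (2 * Real.pi * I / m) ^ (j * a)
      = -(I / 2) * (Real.cot (Real.pi * j / m) : ℝ) := by
  have hm0 : (m : ℂ) ≠ 0 := by exact_mod_cast (by positivity : (0:ℝ) < (m:ℝ)).ne'
  set ζ : ℂ := Complex.exp (2 * Real.pi * I / m) with hζ
  have hprim : IsPrimitiveRoot ζ m := Complex.isPrimitiveRoot_exp m (by omega)
  set x : ℂ := ζ ^ j with hx
  have hx1 : x ≠ 1 := by
    rw [hx]
    intro hone
    have h := (hprim.pow_eq_one_iff_dvd j).mp hone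
    exact absurd (Nat.le_of_dvd (by omega) h) (by omega)
  have hxm : x ^ m = 1 := by
    rw [hx, ← pow_mul, mul_comm, pow_mul, hprim.pow_eq_one, one_pow]
  have step1 : ∀ a ∈ Finset.range m, (sawB m a : ℂ) * ζ ^ (j * a) = (sawB m a : ℂ) * x ^ a :=
    fun a _ => by rw [hx, ← pow_mul]
  rw [Finset.sum_congr rfl step1]
  have step2 : ∑ a ∈ Finset.range m, (sawB m a : ℂ) * x ^ a
      = ∑ a ∈ Finset.range m, ((a : ℂ) / m - 1 / 2) * x ^ a + 1 / 2 := by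
    rw [Finset.range_eq_Ico, Finset.sum_eq_sum_Ico_succ_bot (by omega : 0 < m),
      Finset.sum_eq_sum_Ico_succ_bot (by omega : 0 < m), sawB_zero m 0 (dvd_zero m)]
    have hc : ∀ a ∈ Finset.Ico 1 m, (sawB m a : ℂ) * x ^ a = ((a : ℂ) / m - 1 / 2) * x ^ a := by
      intro a ha
      rw [Finset.mem_Ico] at ha
      rw [sawB_eq m a ha.1 ha.2]
      push_cast
      ring
    rw [Finset.sum_congr rfl hc]
    push_cast
    ring
  have step3 : ∑ a ∈ Finset.range m, ((a : ℂ) / m - 1 / 2) * x ^ a = 1 / (x - 1) := by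
    have hc : ∀ a ∈ Finset.range m, ((a : ℂ) / m - 1 / 2) * x ^ a
        = (1 / m) * ((a : ℂ) * x ^ a) - (1 / 2) * x ^ a := fun a _ => by ring
    rw [Finset.sum_congr rfl hc, Finset.sum_sub_distrib, ← Finset.mul_sum, ← Finset.mul_sum,
      lin_sum x m hxm hx1, geomSumZero x m hxm hx1]
    field_simp
    ring
  rw [step2, step3, ← cot_as_frac m j hm hj1 hjm]

lemma orth (m n : ℕ) (hm : 2 ≤ m) :
    ∑ k ∈ Finset.range m, Complex.exp (2 * Real.pi * I / m) ^ (k * n)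
      = if m ∣ n then (m : ℂ) else 0 := by
  set ζ : ℂ := Complex.exp (2 * Real.pi * I / m) with hζ
  have hprim : IsPrimitiveRoot ζ m := Complex.isPrimitiveRoot_exp m (by omega)
  by_cases h : m ∣ n
  · rw [if_pos h]
    have : ∀ k ∈ Finset.range m, ζ ^ (k * n) = 1 := fun k _ =>
      (hprim.pow_eq_one_iff_dvd _).mpr (Dvd.dvd.mul_left h k)
    rw [Finset.sum_congr rfl this, Finset.sum_const, Finset.card_range]
    simp
  · rw [if_neg h]
    have h1 : ∀ k ∈ Finset.range m, ζ ^ (k * n) = (ζ ^ n) ^ k := fun k _ => by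
      rw [← pow_mul, mul_comm]
    rw [Finset.sum_congr rfl h1]
    exact geomSumZero _ m (by rw [← pow_mul, mul_comm, pow_mul, hprim.pow_eq_one, one_pow])
      (fun hone => h ((hprim.pow_eq_one_iff_dvd n).mp hone))

lemma cot_periodic : Function.Periodic Real.cot Real.pi := fun x => by
  rw [Real.cot_eq_cos_div_sin, Real.cot_eq_cos_div_sin, Real.sin_antiperiodic x,
    Real.cos_antiperiodic x, neg_div_neg_eq]

lemma cot_reduce (m n : ℕ) (hm : 2 ≤ m) :
    Real.cot (Real.pi * n / m) = Real.cot (Real.pi * ((n % m : ℕ) : ℝ) / m) := by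
  have hm0 : (m : ℝ) ≠ 0 := by positivity
  have hn : (n : ℝ) = m * (n / m : ℕ) + (n % m : ℕ) := by exact_mod_cast (Nat.div_add_mod n m).symm
  have harg : Real.pi * n / m = Real.pi * ((n % m : ℕ) : ℝ) / m + (n / m : ℕ) * Real.pi := by
    rw [div_add' _ _ _ hm0, div_eq_div_iff hm0 hm0, hn]
    ring
  rw [harg, (cot_periodic.nat_mul (n / m)) _]

lemma sum_sawB (m : ℕ) (hm : 2 ≤ m) : ∑ a ∈ Finset.range m, sawB m a = 0 := by
  have hm0 : (m : ℝ) ≠ 0 := by positivity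
  have hc : ∀ a ∈ Finset.Ico 1 m, sawB m a = (a : ℝ) / m - 1 / 2 := fun a ha => by
    rw [Finset.mem_Ico] at ha; exact sawB_eq m a ha.1 ha.2
  have hIco : ∑ a ∈ Finset.range m, sawB m a
      = ∑ a ∈ Finset.Ico 1 m, ((a : ℝ) / m - 1 / 2) := by
    rw [Finset.range_eq_Ico, Finset.sum_eq_sum_Ico_succ_bot (by omega : 0 < m),
      sawB_zero m 0 (dvd_zero m), zero_add]
    exact Finset.sum_congr rfl hc
  have hNat : (∑ a ∈ Finset.Ico 1 m, a) * 2 = m * (m - 1) := by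
    have h0 : ∑ a ∈ Finset.range m, a = ∑ a ∈ Finset.Ico 1 m, a := by
      rw [Finset.range_eq_Ico, Finset.sum_eq_sum_Ico_succ_bot (by omega : 0 < m), zero_add]
    rw [← h0]; exact Finset.sum_range_id_mul_two m
  have hcast : ((∑ a ∈ Finset.Ico 1 m, a : ℕ) : ℝ) * 2 = (m : ℝ) * ((m : ℝ) - 1) := by
    calc ((∑ a ∈ Finset.Ico 1 m, a : ℕ) : ℝ) * 2 = (((∑ a ∈ Finset.Ico 1 m, a) * 2 : ℕ) : ℝ) := by
          push_cast; ring
    _ = ((m * (m - 1) : ℕ) : ℝ) := by rw [hNat]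
    _ = (m : ℝ) * ((m : ℝ) - 1) := by rw [Nat.cast_mul, Nat.cast_sub (by omega : 1 ≤ m)]; push_cast; ring
  rw [hIco, Finset.sum_sub_distrib, ← Finset.sum_div, Finset.sum_const, Nat.card_Ico,
    nsmul_eq_mul, ← Nat.cast_sum, Nat.cast_sub (by omega : 1 ≤ m)]
  push_cast at hcast ⊢
  field_simp
  linarith [hcast]

/-- `negRep m t = (m - t % m) % m`, the representative of `-t` mod `m` in `[0, m)`. -/
def negRep (m t : ℕ) : ℕ := (m - t % m) % m

lemma negRep_lt (m t : ℕ) (hm : 2 ≤ m) : negRep m t < m := Nat.mod_lt _ (by omega)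

lemma dvd_negRep_add (m t : ℕ) (hm : 2 ≤ m) : m ∣ (negRep m t + t) := by
  have h2 : m * (t / m) + t % m = t := Nat.div_add_mod t m
  have hlt : t % m < m := Nat.mod_lt _ (by omega)
  rcases Nat.eq_zero_or_pos (t % m) with h | h
  · rw [negRep, h, Nat.sub_zero, Nat.mod_self, zero_add]
    exact Nat.dvd_of_mod_eq_zero h
  · have h1 : negRep m t = m - t % m := Nat.mod_eq_of_lt (by omega)
    rw [h1]
    exact ⟨t / m + 1, by rw [Nat.mul_succ]; omega⟩

lemma eq_negRep_of_dvd (m t a : ℕ) (hm : 2 ≤ m) (ha : a < m) (h : m ∣ (a + t)) :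
    a = negRep m t := by
  have hd2 := dvd_negRep_add m t hm
  have hlt2 := negRep_lt m t hm
  have c1 : (m : ℤ) ∣ ((a : ℤ) + t) := by exact_mod_cast Int.natCast_dvd_natCast.mpr h
  have c2 : (m : ℤ) ∣ ((negRep m t : ℤ) + t) := by exact_mod_cast Int.natCast_dvd_natCast.mpr hd2
  have hz := dvd_sub c1 c2
  have h0 := Int.eq_zero_of_abs_lt_dvd hz (by rw [abs_lt]; constructor <;> omega)
  omega

lemma sawB_negRep (m t : ℕ) (hm : 2 ≤ m) : sawB m (negRep m t) = - sawB m t := by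
  have hlt : t % m < m := Nat.mod_lt _ (by omega)
  rcases Nat.eq_zero_or_pos (t % m) with h | h
  · rw [negRep, h, Nat.sub_zero, Nat.mod_self, sawB_zero m 0 (dvd_zero m),
      sawB_zero m t (Nat.dvd_of_mod_eq_zero h), neg_zero]
  · have h1 : negRep m t = m - t % m := Nat.mod_eq_of_lt (by omega)
    have hm0 : (m : ℝ) ≠ 0 := by positivity
    have hnd : ¬ m ∣ t := fun hd => by rw [Nat.mod_eq_zero_of_dvd hd] at h; omega
    rw [h1, sawB_eq m (m - t % m) (by omega) (by omega), sawB]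
    rw [if_neg hnd]
    rw [Nat.cast_sub (by omega : t % m ≤ m)]
    field_simp
    ring

lemma cotsum_eq (m w : ℕ) (hm : 2 ≤ m) (hw0 : 0 < w) (hwm : w < m) (hcop : Nat.Coprime w m) :
    ∑ k ∈ Finset.Ico 1 m, Real.cot (Real.pi * k / m) * Real.cot (Real.pi * ((k * w : ℕ) : ℝ) / m)
      = 4 * m * ∑ b ∈ Finset.range m, sawB m b * sawB m (w * b) := by
  set ζ : ℂ := Complex.exp (2 * Real.pi * I / m) with hζ
  have hprim : IsPrimitiveRoot ζ m := Complex.isPrimitiveRoot_exp m (by omega)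
  have hζm : ζ ^ m = 1 := hprim.pow_eq_one
  set c : ℕ → ℂ := fun k => ∑ a ∈ Finset.range m, (sawB m a : ℂ) * ζ ^ (k * a) with hcdef
  set d : ℕ → ℂ := fun k => ∑ b ∈ Finset.range m, (sawB m b : ℂ) * ζ ^ (k * (w * b)) with hddef
  -- Step A : per-term identity on Ico 1 m
  have stepA : ∀ k ∈ Finset.Ico 1 m,
      ((Real.cot (Real.pi * k / m) * Real.cot (Real.pi * ((k * w : ℕ) : ℝ) / m) : ℝ) : ℂ)
        = -4 * (c k * d k) := by
    intro k hk
    rw [Finset.mem_Ico] at hk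
    have h1 : (Real.cot (Real.pi * k / m) : ℂ) = 2 * I * c k := by
      have hf := sawB_fourier m k hm hk.1 hk.2
      rw [hcdef]
      linear_combination (-2 * I) * hf + (Real.cot (Real.pi * k / m) : ℂ) * Complex.I_sq
    have hndvd : ¬ m ∣ k * w := by
      intro hd
      have := (Nat.Coprime.dvd_of_dvd_mul_right (hcop.symm) hd)
      exact absurd (Nat.le_of_dvd (by omega) this) (by omega)
    set r : ℕ := (k * w) % m with hr
    have hr1 : 1 ≤ r := by
      rcases Nat.eq_zero_or_pos r with h0 | h0
      · exact absurd (Nat.dvd_of_mod_eq_zero h0) hndvd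
      · omega
    have hrm : r < m := Nat.mod_lt _ (by omega)
    have h2 : (Real.cot (Real.pi * ((k * w : ℕ) : ℝ) / m) : ℂ) = 2 * I * d k := by
      rw [cot_reduce m (k * w) hm, ← hr]
      have hf := sawB_fourier m r hm hr1 hrm
      have hsame : ∀ a ∈ Finset.range m, (sawB m a : ℂ) * ζ ^ (r * a)
          = (sawB m a : ℂ) * ζ ^ (k * (w * a)) := by
        intro a _
        have hpow : ζ ^ r = ζ ^ (k * w) := (pow_eq_pow_mod (k * w) hζm).symm
        have : ζ ^ (r * a) = ζ ^ (k * (w * a)) := by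
          rw [pow_mul, hpow, ← pow_mul, mul_assoc]
        rw [this]
      rw [Finset.sum_congr rfl hsame] at hf
      rw [hddef]
      linear_combination (-2 * I) * hf
        + (Real.cot (Real.pi * ((r : ℕ) : ℝ) / m) : ℂ) * Complex.I_sq
    rw [Complex.ofReal_mul, h1, h2]
    linear_combination (4 * c k * d k) * Complex.I_sq
  -- Step C : convolution identity
  have stepC : ∑ k ∈ Finset.range m, c k * d k
      = -(m : ℂ) * ∑ b ∈ Finset.range m, (sawB m b : ℂ) * (sawB m (w * b) : ℂ) := by
    have e1 : ∀ k ∈ Finset.range m, c k * d k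
        = ∑ a ∈ Finset.range m, ∑ b ∈ Finset.range m,
            (sawB m a : ℂ) * (sawB m b : ℂ) * ζ ^ (k * (a + w * b)) := by
      intro k _
      rw [hcdef, hddef]
      rw [Finset.sum_mul_sum]
      refine Finset.sum_congr rfl fun a _ => Finset.sum_congr rfl fun b _ => ?_
      rw [mul_add k a (w * b), pow_add]
      ring
    rw [Finset.sum_congr rfl e1, Finset.sum_comm]
    have e2 : ∀ a ∈ Finset.range m, ∑ k ∈ Finset.range m, ∑ b ∈ Finset.range m,
          (sawB m a : ℂ) * (sawB m b : ℂ) * ζ ^ (k * (a + w * b))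
        = ∑ b ∈ Finset.range m,
            (sawB m a : ℂ) * (sawB m b : ℂ) * (if m ∣ (a + w * b) then (m : ℂ) else 0) := by
      intro a _
      rw [Finset.sum_comm]
      refine Finset.sum_congr rfl fun b _ => ?_
      rw [← Finset.mul_sum, orth m (a + w * b) hm]
    rw [Finset.sum_congr rfl e2, Finset.sum_comm]
    have e3 : ∀ b ∈ Finset.range m, ∑ a ∈ Finset.range m,
          (sawB m a : ℂ) * (sawB m b : ℂ) * (if m ∣ (a + w * b) then (m : ℂ) else 0)
        = -(m : ℂ) * ((sawB m b : ℂ) * (sawB m (w * b) : ℂ)) := by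
      intro b _
      rw [Finset.sum_eq_single (negRep m (w * b))]
      · rw [if_pos (dvd_negRep_add m (w * b) hm)]
        have : (sawB m (negRep m (w * b)) : ℝ) = - sawB m (w * b) := sawB_negRep m (w * b) hm
        rw [this]
        push_cast
        ring
      · intro a ha hne
        rw [Finset.mem_range] at ha
        rw [if_neg (fun hd => hne (eq_negRep_of_dvd m (w * b) a hm ha hd)), mul_zero]
      · intro habs
        exact absurd (Finset.mem_range.mpr (negRep_lt m (w * b) hm)) habs
    rw [Finset.sum_congr rfl e3, ← Finset.mul_sum]
  -- Step B/D : assemble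
  have hc0 : c 0 = 0 := by
    simp only [hcdef]
    have : ∀ a ∈ Finset.range m, (sawB m a : ℂ) * ζ ^ (0 * a) = (sawB m a : ℂ) := by
      intro a _; rw [zero_mul, pow_zero, mul_one]
    rw [Finset.sum_congr rfl this, ← Complex.ofReal_sum, sum_sawB m hm, Complex.ofReal_zero]
  have hrange : ∑ k ∈ Finset.range m, c k * d k = ∑ k ∈ Finset.Ico 1 m, c k * d k := by
    rw [Finset.range_eq_Ico, Finset.sum_eq_sum_Ico_succ_bot (by omega : 0 < m), hc0, zero_mul,
      zero_add]
  have final : ((∑ k ∈ Finset.Ico 1 m,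
        Real.cot (Real.pi * k / m) * Real.cot (Real.pi * ((k * w : ℕ) : ℝ) / m) : ℝ) : ℂ)
      = ((4 * m * ∑ b ∈ Finset.range m, sawB m b * sawB m (w * b) : ℝ) : ℂ) := by
    rw [Complex.ofReal_sum, Finset.sum_congr rfl stepA, ← Finset.mul_sum, ← hrange, stepC]
    push_cast
    ring
  exact_mod_cast final

lemma sum_range_eq_Ico {M : Type*} [AddCommMonoid M] (m : ℕ) (hm : 0 < m) (f : ℕ → M)
    (h0 : f 0 = 0) : ∑ b ∈ Finset.range m, f b = ∑ b ∈ Finset.Ico 1 m, f b := by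
  rw [Finset.range_eq_Ico, Finset.sum_eq_sum_Ico_succ_bot hm, h0, zero_add]

lemma perm_sum {M : Type*} [AddCommMonoid M] (m w : ℕ) (hm : 2 ≤ m) (hcop : Nat.Coprime w m)
    (f : ℕ → M) : ∑ b ∈ Finset.range m, f ((w * b) % m) = ∑ b ∈ Finset.range m, f b := by
  have hinj : ∀ x ∈ Finset.range m, ∀ y ∈ Finset.range m,
      (w * x) % m = (w * y) % m → x = y := by
    intro x hx y hy hxy
    rw [Finset.mem_range] at hx hy
    have h1 : x ≡ y [MOD m] :=
      Nat.ModEq.cancel_left_of_coprime (by rwa [Nat.gcd_comm]) hxy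
    have h2 : x % m = y % m := h1
    rwa [Nat.mod_eq_of_lt hx, Nat.mod_eq_of_lt hy] at h2
  have himg : Finset.image (fun b => (w * b) % m) (Finset.range m) = Finset.range m := by
    apply Finset.eq_of_subset_of_card_le
    · intro x hx
      rw [Finset.mem_image] at hx
      obtain ⟨b, _, rfl⟩ := hx
      exact Finset.mem_range.mpr (Nat.mod_lt _ (by omega))
    · rw [Finset.card_image_of_injOn hinj]
  conv_rhs => rw [← himg]
  rw [Finset.sum_image hinj]

lemma six_sum_sq (n : ℕ) :
    6 * ∑ i ∈ Finset.range n, (i : ℤ) ^ 2 = n * (n - 1) * (2 * n - 1) := by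
  induction n with
  | zero => simp
  | succ n ih =>
    rw [Finset.sum_range_succ]
    push_cast
    push_cast at ih
    linear_combination ih


/-- The Dedekind sum `s(w; m) = (1/(4m)) ∑_{k=1}^{m-1} cot(πk/m) cot(πkw/m)`. -/
noncomputable def dedekindSum (w m : ℕ) : ℝ :=
  (1 / (4 * (m : ℝ))) *
    ∑ k ∈ Finset.Ico 1 m,
      Real.cot (Real.pi * k / m) * Real.cot (Real.pi * (k * w) / m)

/-- For `m ≥ 2` and `0 < w < m` with `gcd(w,m)=1`,
    `12wm·s(w;m)` is an integer congruent to `w² + 1` modulo `m`. -/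
theorem twelve_w_m_mul_dedekindSum_modEq
    (m w : ℕ) (hm : 2 ≤ m) (hw0 : 0 < w) (hwm : w < m) (hcop : Nat.Coprime w m) :
    ∃ z : ℤ, 12 * (w : ℝ) * (m : ℝ) * dedekindSum w m = (z : ℝ) ∧
      z ≡ (w : ℤ) ^ 2 + 1 [ZMOD (m : ℤ)] := by
  have hm0R : (m : ℝ) ≠ 0 := by positivity
  have hm0Z : (m : ℤ) ≠ 0 := by exact_mod_cast (by omega : m ≠ 0)
  set s : ℕ → ℕ := fun b => (w * b) % m with hsdef
  set q : ℕ → ℕ := fun b => (w * b) / m with hqdef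
  -- basic division identity
  have hAZ : ∀ b : ℕ, (w : ℤ) * b = m * (q b) + s b := by
    intro b
    have h := Nat.div_add_mod (w * b) m
    have h2 : ((m * ((w * b) / m) + (w * b) % m : ℕ) : ℤ) = ((w * b : ℕ) : ℤ) := by rw [h]
    push_cast at h2
    simp only [hsdef, hqdef]
    push_cast
    linarith
  -- m does not divide w*b for b in Ico 1 m
  have hndvd : ∀ b ∈ Finset.Ico 1 m, ¬ m ∣ w * b := by
    intro b hb hd
    rw [Finset.mem_Ico] at hb
    have := Nat.Coprime.dvd_of_dvd_mul_left (hcop.symm) hd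
    exact absurd (Nat.le_of_dvd (by omega) this) (by omega)
  -- integer sums
  set T : ℤ := ∑ b ∈ Finset.Ico 1 m, (q b : ℤ) * (s b : ℤ) with hT
  set Q2 : ℤ := ∑ b ∈ Finset.Ico 1 m, (q b : ℤ) ^ 2 with hQ2
  set G1 : ℤ := ∑ b ∈ Finset.Ico 1 m, (b : ℤ) with hG1
  set G2 : ℤ := ∑ b ∈ Finset.Ico 1 m, (b : ℤ) ^ 2 with hG2
  set P1 : ℤ := ∑ b ∈ Finset.Ico 1 m, (s b : ℤ) with hP1
  set P2 : ℤ := ∑ b ∈ Finset.Ico 1 m, (s b : ℤ) ^ 2 with hP2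
  set A : ℤ := ∑ b ∈ Finset.Ico 1 m, (b : ℤ) * (s b : ℤ) with hA
  set U : ℤ := ∑ b ∈ Finset.Ico 1 m, (2 * (b : ℤ) - m) * (2 * (s b : ℤ) - m) with hU
  set z : ℤ := 12 * T + 2 * ((m : ℤ) - 1) * (2 * (m : ℤ) - 1)
      - 3 * (w : ℤ) * m * ((m : ℤ) - 1) with hzdef
  -- permutation identities
  have hperm1 : P1 = G1 := by
    rw [hP1, hG1, ← sum_range_eq_Ico m (by omega) (fun b => ((s b : ℕ) : ℤ)) (by simp [hsdef]),
      ← sum_range_eq_Ico m (by omega) (fun b => ((b : ℕ) : ℤ)) (by simp)]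
    exact perm_sum m w hm hcop (fun n => (n : ℤ))
  have hperm2 : P2 = G2 := by
    rw [hP2, hG2, ← sum_range_eq_Ico m (by omega) (fun b => ((s b : ℕ) : ℤ) ^ 2) (by simp [hsdef]),
      ← sum_range_eq_Ico m (by omega) (fun b => ((b : ℕ) : ℤ) ^ 2) (by simp)]
    exact perm_sum m w hm hcop (fun n => (n : ℤ) ^ 2)
  -- Gauss sums
  have gauss1 : 2 * G1 = (m : ℤ) * ((m : ℤ) - 1) := by
    have g := Finset.sum_range_id_mul_two m
    have g' : ((∑ i ∈ Finset.range m, i : ℕ) : ℤ) * 2 = ((m * (m - 1) : ℕ) : ℤ) := by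
      exact_mod_cast congrArg (Nat.cast : ℕ → ℤ) g
    rw [hG1, ← sum_range_eq_Ico m (by omega) (fun b => ((b : ℕ) : ℤ)) (by simp)]
    rw [Nat.cast_mul, Nat.cast_sub (by omega : 1 ≤ m)] at g'
    push_cast at g' ⊢
    linarith
  have gauss2 : 6 * G2 = (m : ℤ) * ((m : ℤ) - 1) * (2 * (m : ℤ) - 1) := by
    have g := six_sum_sq m
    rw [hG2, ← sum_range_eq_Ico m (by omega) (fun b => ((b : ℕ) : ℤ) ^ 2) (by simp)]
    exact g
  -- pointwise-summed identities
  have hwA : (w : ℤ) * A = m * T + P2 := by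
    rw [hA, Finset.mul_sum, hT, hP2, Finset.mul_sum, ← Finset.sum_add_distrib]
    refine Finset.sum_congr rfl fun b _ => ?_
    linear_combination (s b : ℤ) * hAZ b
  have hw2 : (w : ℤ) ^ 2 * G2 = m ^ 2 * Q2 + 2 * m * T + P2 := by
    rw [hG2, Finset.mul_sum, hQ2, hT, hP2, Finset.mul_sum, Finset.mul_sum,
      ← Finset.sum_add_distrib, ← Finset.sum_add_distrib]
    refine Finset.sum_congr rfl fun b _ => ?_
    linear_combination ((w : ℤ) * b + m * q b + s b) * hAZ b
  have hconst : ∑ _b ∈ Finset.Ico 1 m, (m : ℤ) ^ 2 = m ^ 2 * ((m : ℤ) - 1) := by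
    rw [Finset.sum_const, Nat.card_Ico, nsmul_eq_mul, Nat.cast_sub (by omega : 1 ≤ m)]
    push_cast
    ring
  have hUexp : U + 2 * m * G1 + 2 * m * P1 = 4 * A + m ^ 2 * ((m : ℤ) - 1) := by
    rw [hU, hG1, hP1, hA, Finset.mul_sum, Finset.mul_sum, Finset.mul_sum, ← hconst,
      ← Finset.sum_add_distrib, ← Finset.sum_add_distrib, ← Finset.sum_add_distrib]
    refine Finset.sum_congr rfl fun b _ => ?_
    ring
  -- the two key integer identities
  have hZ : 3 * (w : ℤ) * U = m * z := by
    rw [hzdef]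
    linear_combination 3 * (w : ℤ) * hUexp + 12 * hwA + 12 * hperm2
      - 6 * (w : ℤ) * (m : ℤ) * hperm1 - 6 * (w : ℤ) * (m : ℤ) * gauss1 + 2 * gauss2
  have hQcong : (m : ℤ) * (12 * T)
      = m * (((w : ℤ) ^ 2 - 1) * ((m : ℤ) - 1) * (2 * (m : ℤ) - 1) - 6 * m * Q2) := by
    linear_combination (-6 : ℤ) * hw2 + (-6 : ℤ) * hperm2 + ((w : ℤ) ^ 2 - 1) * gauss2
  have hQ : 12 * T = ((w : ℤ) ^ 2 - 1) * ((m : ℤ) - 1) * (2 * (m : ℤ) - 1) - 6 * m * Q2 :=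
    mul_left_cancel₀ hm0Z hQcong
  refine ⟨z, ?_, ?_⟩
  · -- real equality
    have hded : dedekindSum w m = ∑ b ∈ Finset.range m, sawB m b * sawB m (w * b) := by
      rw [dedekindSum]
      have hcast : ∀ k ∈ Finset.Ico 1 m,
          Real.cot (Real.pi * k / m) * Real.cot (Real.pi * (k * w) / m)
            = Real.cot (Real.pi * k / m) * Real.cot (Real.pi * ((k * w : ℕ) : ℝ) / m) := by
        intro k _
        norm_cast
      rw [Finset.sum_congr rfl hcast, cotsum_eq m w hm hw0 hwm hcop]
      field_simp
    have hIcoBB : ∑ b ∈ Finset.range m, sawB m b * sawB m (w * b)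
        = ∑ b ∈ Finset.Ico 1 m, sawB m b * sawB m (w * b) :=
      sum_range_eq_Ico m (by omega) _ (by simp [sawB_zero m 0 (dvd_zero m)])
    have key : ∀ b ∈ Finset.Ico 1 m, 12 * (w : ℝ) * m * (sawB m b * sawB m (w * b))
        = (3 * (w : ℝ) / m) * ((2 * (b : ℝ) - m) * (2 * ((s b : ℕ) : ℝ) - m)) := by
      intro b hb
      have hb' := Finset.mem_Ico.mp hb
      rw [sawB_eq m b hb'.1 hb'.2, sawB, if_neg (hndvd b hb)]
      simp only [hsdef]
      field_simp
      ring
    have hUcast : ((U : ℤ) : ℝ)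
        = ∑ b ∈ Finset.Ico 1 m, (2 * (b : ℝ) - m) * (2 * ((s b : ℕ) : ℝ) - m) := by
      rw [hU]
      push_cast
      rfl
    have hZR : 3 * (w : ℝ) * ((U : ℤ) : ℝ) = (m : ℝ) * ((z : ℤ) : ℝ) := by
      exact_mod_cast congrArg (Int.cast : ℤ → ℝ) hZ
    calc 12 * (w : ℝ) * (m : ℝ) * dedekindSum w m
        = ∑ b ∈ Finset.Ico 1 m, 12 * (w : ℝ) * m * (sawB m b * sawB m (w * b)) := by
          rw [hded, hIcoBB, Finset.mul_sum]
      _ = ∑ b ∈ Finset.Ico 1 m,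
            (3 * (w : ℝ) / m) * ((2 * (b : ℝ) - m) * (2 * ((s b : ℕ) : ℝ) - m)) :=
          Finset.sum_congr rfl key
      _ = (3 * (w : ℝ) / m) * ((U : ℤ) : ℝ) := by rw [← Finset.mul_sum, hUcast]
      _ = ((z : ℤ) : ℝ) := by
          field_simp
          linear_combination hZR
  · -- congruence
    rw [Int.ModEq]
    have hdvd : (m : ℤ) ∣ ((w : ℤ) ^ 2 + 1) - z := by
      refine ⟨-(((w : ℤ) ^ 2 + 1) * (2 * m - 3) - 6 * Q2 - 3 * w * ((m : ℤ) - 1)), ?_⟩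
      rw [hzdef]
      linear_combination -hQ
    exact (Int.modEq_iff_dvd.mpr hdvd)
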